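/- The Dunkl operator identity: in D(ℂ*) ⋊ ℤ_m, setting Θ_h(y) = d/dx + (m/x)∑_{i=0}^{m−1} h_i e_i and e = e_0 the trivial idempotent, the m-th power satisfies Θ_h(y^m e)(x^r) = ∏_{i=1}^{m} (r − m + i + m h_i) · x^{r−m} for all r ∈ ℤ with r ≡ 0 mod m (acting on ℤ_m-invariant monomials). -/

import Mathlib

open LaurentPolynomial

noncomputable section

/-- The derivative `d/dx` on Laurent polynomials `ℂ[x, x⁻¹]`, sending `x^k ↦ k x^{k-1}`. -/
def lderiv (f : LaurentPolynomial ℂ) : LaurentPolynomial ℂ :=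
  Finsupp.sum f.coeff fun k a => ((k : ℂ) * a) • LaurentPolynomial.T (k - 1)

/-- The Dunkl-type operator `d/dx + (m c)/x` acting on Laurent polynomials. -/
def dunklFactor (m : ℕ) (c : ℂ) (f : LaurentPolynomial ℂ) : LaurentPolynomial ℂ :=
  lderiv f + ((m : ℂ) * c) • (LaurentPolynomial.T (-1) * f)

/-- `Θ_h(y^m e) = (d/dx + (m/x) h_1) ∘ (d/dx + (m/x) h_2) ∘ ⋯ ∘ (d/dx + (m/x) h_m)`,
the product `∏_{i=1}^m (d/dx + (m/x) h_i)` composed in decreasing order of `i` (the factor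
`i = m` acting first). -/
def dunklPower (m : ℕ) (h : ℕ → ℂ) : LaurentPolynomial ℂ → LaurentPolynomial ℂ :=
  (List.range m).foldr (fun k acc => fun f => dunklFactor m (h (k + 1)) (acc f)) id

lemma smul_T_eq (a : ℂ) (k : ℤ) :
    (a • LaurentPolynomial.T k : LaurentPolynomial ℂ).coeff = Finsupp.single k a := by
  ext n
  simp [Finsupp.single_apply]

lemma lderiv_smul_T (a : ℂ) (k : ℤ) :
    lderiv (a • LaurentPolynomial.T k)
      = ((k : ℂ) * a) • LaurentPolynomial.T (k - 1) := by
  rw [lderiv, smul_T_eq, Finsupp.sum_single_index]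
  simp

lemma dunklFactor_smul_T (m : ℕ) (c : ℂ) (a : ℂ) (k : ℤ) :
    dunklFactor m c (a • LaurentPolynomial.T k)
      = (a * ((k : ℂ) + (m : ℂ) * c)) • LaurentPolynomial.T (k - 1) := by
  rw [dunklFactor, lderiv_smul_T]
  rw [mul_smul_comm, ← LaurentPolynomial.T_add]
  rw [show (-1 + k : ℤ) = k - 1 by ring]
  rw [smul_smul, ← add_smul]
  ring_nf

lemma foldr_comp (m : ℕ) (h : ℕ → ℂ) (l : List ℕ)
    (A : LaurentPolynomial ℂ → LaurentPolynomial ℂ) (f : LaurentPolynomial ℂ) :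
    l.foldr (fun k acc => fun f => dunklFactor m (h (k + 1)) (acc f)) A f
      = l.foldr (fun k acc => fun f => dunklFactor m (h (k + 1)) (acc f)) id (A f) := by
  induction l generalizing f with
  | nil => rfl
  | cons a l ih => simp only [List.foldr_cons, ih]

lemma dunklPower_smul_T (m : ℕ) (h : ℕ → ℂ) :
    ∀ (n : ℕ) (a : ℂ) (k : ℤ),
    (List.range n).foldr (fun j acc => fun f => dunklFactor m (h (j + 1)) (acc f)) id
        (a • LaurentPolynomial.T k)
      = (a * ∏ i ∈ Finset.range n,
            ((k : ℂ) - (n : ℂ) + ((i : ℂ) + 1) + (m : ℂ) * h (i + 1))) •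
          LaurentPolynomial.T (k - (n : ℤ)) := by
  intro n
  induction n with
  | zero => intro a k; simp
  | succ n ih =>
    intro a k
    rw [List.range_succ, List.foldr_append, List.foldr_cons, List.foldr_nil]
    rw [foldr_comp]
    show (List.range n).foldr _ id (dunklFactor m (h (n + 1)) (a • LaurentPolynomial.T k)) = _
    rw [dunklFactor_smul_T, ih]
    rw [Finset.prod_range_succ]
    have hp : ∏ i ∈ Finset.range n,
          (((k - 1 : ℤ) : ℂ) - (n : ℂ) + ((i : ℂ) + 1) + (m : ℂ) * h (i + 1))
        = ∏ i ∈ Finset.range n,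
          ((k : ℂ) - ((n : ℕ) + 1 : ℕ) + ((i : ℂ) + 1) + (m : ℂ) * h (i + 1)) :=
      Finset.prod_congr rfl (fun i _ => by push_cast; ring)
    rw [hp]
    congr 1
    · push_cast
      ring
    · congr 1
      push_cast
      ring

/-- **Dunkl operator identity.** In `D(ℂ*) ⋊ ℤ_m`, with
`Θ_h(y) = d/dx + (m/x) ∑ h_i e_i` and `e = e_0` the trivial idempotent, the operator
`Θ_h(y^m e) = ∏_{i=1}^m (d/dx + (m/x) h_i)` satisfies
`Θ_h(y^m e)(x^r) = ∏_{i=1}^m (r − m + i + m h_i) · x^{r−m}` for every `r ∈ ℤ` with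
`r ≡ 0 (mod m)` (acting on `ℤ_m`-invariant monomials). -/
theorem stmt14 (m : ℕ) (h : ℕ → ℂ) (r : ℤ) (hr : (m : ℤ) ∣ r) :
    dunklPower m h (LaurentPolynomial.T r) =
      (∏ i ∈ Finset.range m, ((r : ℂ) - (m : ℂ) + ((i : ℂ) + 1) + (m : ℂ) * h (i + 1))) •
        LaurentPolynomial.T (r - (m : ℤ)) := by
  have key := dunklPower_smul_T m h m 1 r
  rw [one_smul, one_mul] at key
  exact key

end
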